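/- For every finite digraph D there exists a dominating broadcast f of minimum cost (i.e., of cost γ_b(D)) such that every broadcast dominator is covered only by itself: for all vertices u, v with f(u) ≥ 1, f(v) ≥ 1 and u ≠ v, we have d(u,v) > f(u). -/

import Mathlib

open scoped Classical

/-- `HasPath A k u v` means there is a directed walk of length `k` from `u` to `v`
in the digraph with arc relation `A`. -/
def HasPath {V : Type*} (A : V → V → Prop) : ℕ → V → V → Prop
  | 0, u, v => u = v
  | (n+1), u, v => ∃ w, A u w ∧ HasPath A n w v

/-- The directed distance from `u` to `v` (in `ℕ∞`, `⊤` meaning no directed path exists). -/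
noncomputable def ddist {V : Type*} (A : V → V → Prop) (u v : V) : ℕ∞ :=
  sInf {n : ℕ∞ | ∃ k : ℕ, n = (k : ℕ∞) ∧ HasPath A k u v}

/-- `f : V → ℕ` is a dominating broadcast: every vertex `v` is within directed
distance `f t` of some vertex `t` with `f t ≥ 1`. -/
def IsDomBroadcast {V : Type*} (A : V → V → Prop) (f : V → ℕ) : Prop :=
  ∀ v : V, ∃ t : V, 1 ≤ f t ∧ ddist A t v ≤ (f t : ℕ∞)

/-- The cost of a broadcast. -/
def cost {V : Type*} [Fintype V] (f : V → ℕ) : ℕ := ∑ v, f v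

/-- The broadcast domination number `γ_b`. -/
noncomputable def gammaB {V : Type*} [Fintype V] (A : V → V → Prop) : ℕ :=
  sInf {c : ℕ | ∃ f : V → ℕ, IsDomBroadcast A f ∧ cost f = c}

/-- `S` is a multipacking: for every vertex `v` and every `e ≥ 1`, at most `e`
vertices of `S` are at directed distance at most `e` from `v`. -/
noncomputable def IsMultipacking {V : Type*} [Fintype V] (A : V → V → Prop) (S : Finset V) : Prop :=
  ∀ v : V, ∀ e : ℕ, 1 ≤ e → (S.filter (fun u => ddist A v u ≤ (e : ℕ∞))).card ≤ e

/-- The multipacking number `mp`. -/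
noncomputable def mpNum {V : Type*} [Fintype V] (A : V → V → Prop) : ℕ :=
  sSup {c : ℕ | ∃ S : Finset V, IsMultipacking A S ∧ S.card = c}

lemma hasPath_trans {V : Type*} (A : V → V → Prop) {m n : ℕ} {a b c : V}
    (h1 : HasPath A m a b) (h2 : HasPath A n b c) : HasPath A (m + n) a c := by
  induction m generalizing a with
  | zero => simp only [HasPath] at h1; subst h1; simpa using h2
  | succ k ih =>
    obtain ⟨w, haw, hwb⟩ := h1
    have : k + 1 + n = (k + n) + 1 := by omega
    rw [this]
    exact ⟨w, haw, ih hwb⟩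

lemma ddist_le_of_hasPath {V : Type*} (A : V → V → Prop) {k : ℕ} {u v : V}
    (h : HasPath A k u v) : ddist A u v ≤ (k : ℕ∞) :=
  sInf_le ⟨k, rfl, h⟩

lemma ddist_self {V : Type*} (A : V → V → Prop) (u : V) : ddist A u u = 0 := by
  have : HasPath A 0 u u := rfl
  have h := ddist_le_of_hasPath A this
  simpa using h

lemma exists_hasPath_of_ddist_le {V : Type*} (A : V → V → Prop) {n : ℕ} {u v : V}
    (h : ddist A u v ≤ (n : ℕ∞)) : ∃ k : ℕ, k ≤ n ∧ HasPath A k u v := by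
  by_contra hcon
  push_neg at hcon
  have hle : ((n : ℕ∞) + 1) ≤ ddist A u v := by
    apply le_sInf
    rintro m ⟨k, rfl, hk⟩
    have : n < k := by
      by_contra hnk
      exact hcon k (by omega) hk
    exact_mod_cast this
  have : (n : ℕ∞) + 1 ≤ (n : ℕ∞) := hle.trans h
  have h2 : ((n+1 : ℕ) : ℕ∞) ≤ ((n : ℕ) : ℕ∞) := by push_cast; exact this
  have := Nat.cast_le.mp h2
  omega

lemma ddist_triangle {V : Type*} (A : V → V → Prop) (a b c : V) :
    ddist A a c ≤ ddist A a b + ddist A b c := by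
  rcases eq_or_ne (ddist A a b) ⊤ with h1 | h1
  · rw [h1, top_add]; exact le_top
  rcases eq_or_ne (ddist A b c) ⊤ with h2 | h2
  · rw [h2, add_top]; exact le_top
  lift ddist A a b to ℕ using h1 with m hm
  lift ddist A b c to ℕ using h2 with n hn
  obtain ⟨k, hk, hpk⟩ := exists_hasPath_of_ddist_le A (le_of_eq hm.symm)
  obtain ⟨l, hl, hpl⟩ := exists_hasPath_of_ddist_le A (le_of_eq hn.symm)
  have := ddist_le_of_hasPath A (hasPath_trans A hpk hpl)
  refine this.trans ?_
  exact_mod_cast Nat.add_le_add hk hl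

/-- There is an optimal (minimum-cost) dominating broadcast in which every
broadcast dominator is covered only by itself. -/
theorem stmt_0 {V : Type*} [Fintype V] (A : V → V → Prop) (hirr : ∀ v, ¬ A v v) :
    ∃ f : V → ℕ, IsDomBroadcast A f ∧ cost f = gammaB A ∧
      ∀ u v : V, 1 ≤ f u → 1 ≤ f v → u ≠ v → (f u : ℕ∞) < ddist A u v := by
  classical
  -- the constant-1 broadcast is dominating
  have hone : IsDomBroadcast A (fun _ => 1) := by
    intro v
    exact ⟨v, le_refl 1, by rw [ddist_self A v]; exact zero_le⟩
  have hSne : {c : ℕ | ∃ f : V → ℕ, IsDomBroadcast A f ∧ cost f = c}.Nonempty :=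
    ⟨cost (fun _ : V => 1), ⟨_, hone, rfl⟩⟩
  have hγ : gammaB A ∈ {c : ℕ | ∃ f : V → ℕ, IsDomBroadcast A f ∧ cost f = c} :=
    Nat.sInf_mem hSne
  -- set of support sizes of optimal broadcasts
  set T : Set ℕ := {s : ℕ | ∃ f : V → ℕ, IsDomBroadcast A f ∧ cost f = gammaB A ∧
      (Finset.univ.filter (fun w => 1 ≤ f w)).card = s} with hT
  have hTne : T.Nonempty := by
    obtain ⟨f, hf, hc⟩ := hγ
    exact ⟨_, f, hf, hc, rfl⟩
  obtain ⟨f, hf, hc, hs⟩ := Nat.sInf_mem hTne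
  refine ⟨f, hf, hc, ?_⟩
  by_contra hcon
  push_neg at hcon
  obtain ⟨u, v, hu, hv, huv, hduv⟩ := hcon
  -- build the modified broadcast
  set g : V → ℕ := Function.update (Function.update f u (f u + f v)) v 0 with hg
  have hgv : g v = 0 := by simp [hg]
  have hgu : g u = f u + f v := by
    simp [hg, Function.update_of_ne huv]
  have hgw : ∀ w, w ≠ u → w ≠ v → g w = f w := by
    intro w hwu hwv
    simp [hg, Function.update_of_ne hwv, Function.update_of_ne hwu]
  -- g is dominating
  have hgdom : IsDomBroadcast A g := by
    intro w
    obtain ⟨t, ht1, htd⟩ := hf w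
    by_cases htv : t = v
    · subst htv
      refine ⟨u, by omega, ?_⟩
      calc ddist A u w ≤ ddist A u t + ddist A t w := ddist_triangle A u t w
        _ ≤ (f u : ℕ∞) + (f t : ℕ∞) := add_le_add hduv htd
        _ = ((f u + f t : ℕ) : ℕ∞) := by push_cast; ring
        _ = (g u : ℕ∞) := by rw [hgu]
    · by_cases htu : t = u
      · subst htu
        refine ⟨t, by omega, ?_⟩
        refine le_trans htd ?_
        rw [hgu]
        exact_mod_cast Nat.le_add_right _ _
      · exact ⟨t, by rw [hgw t htu htv]; exact ht1, by rw [hgw t htu htv]; exact htd⟩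
  -- g has the same cost
  have hgcost : cost g = cost f := by
    have hvmem : v ∈ (Finset.univ : Finset V) := Finset.mem_univ v
    have humem : u ∈ Finset.univ.erase v := Finset.mem_erase.2 ⟨huv, Finset.mem_univ u⟩
    have h1 : cost g = 0 + ∑ x ∈ Finset.univ \ {v},
        Function.update f u (f u + f v) x := by
      unfold cost
      rw [hg, Finset.sum_update_of_mem hvmem]
    have h2 : (Finset.univ \ {v} : Finset V) = Finset.univ.erase v := by
      rw [Finset.sdiff_singleton_eq_erase]
    have h3 : ∑ x ∈ Finset.univ.erase v, Function.update f u (f u + f v) x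
        = (f u + f v) + ∑ x ∈ (Finset.univ.erase v) \ {u}, f x := by
      rw [Finset.sum_update_of_mem humem]
    have h4 : ((Finset.univ.erase v) \ {u} : Finset V) = (Finset.univ.erase v).erase u := by
      rw [Finset.sdiff_singleton_eq_erase]
    have h5 : cost f = f v + ∑ x ∈ Finset.univ.erase v, f x := by
      unfold cost
      rw [Finset.add_sum_erase _ _ hvmem]
    have h6 : ∑ x ∈ Finset.univ.erase v, f x
        = f u + ∑ x ∈ (Finset.univ.erase v).erase u, f x := by
      rw [Finset.add_sum_erase _ _ humem]
    rw [h1, h2, h3, h4, h5, h6]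
    ring
  -- g has strictly smaller support
  have hsub : (Finset.univ.filter (fun w => 1 ≤ g w)) ⊂
      (Finset.univ.filter (fun w => 1 ≤ f w)) := by
    constructor
    · intro w hw
      rw [Finset.mem_filter] at hw ⊢
      refine ⟨Finset.mem_univ w, ?_⟩
      by_cases hwv : w = v
      · subst hwv; rw [hgv] at hw; omega
      · by_cases hwu : w = u
        · subst hwu; exact hu
        · rw [hgw w hwu hwv] at hw; exact hw.2
    · intro hsup
      have hvin : v ∈ Finset.univ.filter (fun w => 1 ≤ f w) :=
        Finset.mem_filter.2 ⟨Finset.mem_univ v, hv⟩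
      have := hsup hvin
      rw [Finset.mem_filter, hgv] at this
      omega
  have hcard : (Finset.univ.filter (fun w => 1 ≤ g w)).card <
      (Finset.univ.filter (fun w => 1 ≤ f w)).card := Finset.card_lt_card hsub
  have hmem : (Finset.univ.filter (fun w => 1 ≤ g w)).card ∈ T :=
    ⟨g, hgdom, by rw [hgcost]; exact hc, rfl⟩
  have := Nat.sInf_le hmem
  omega
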